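/- A functional y in the order dual X~ of a vector lattice X is order continuous if and only if y(x_α) → 0 for every eventually order bounded net x_α that is uo-convergent to 0. -/

import Mathlib

set_option linter.unusedSectionVars false
set_option maxHeartbeats 1000000

open Filter Set

section ODual

variable (E : Type*) [AddCommGroup E] [Preorder E] [Module ℝ E]

/-- The order (bounded) dual: linear functionals bounded on order intervals. -/
noncomputable def obDual : Submodule ℝ (E →ₗ[ℝ] ℝ) where
  carrier := {f | ∀ w : E, ∃ M : ℝ, ∀ x : E, -w ≤ x → x ≤ w → |f x| ≤ M}
  zero_mem' := fun w => ⟨0, fun x _ _ => by simp⟩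
  add_mem' := fun {f g} hf hg w => by
    obtain ⟨M, hM⟩ := hf w
    obtain ⟨N, hN⟩ := hg w
    refine ⟨M + N, fun x h1 h2 => ?_⟩
    calc |(f + g) x| = |f x + g x| := by simp
    _ ≤ |f x| + |g x| := abs_add_le _ _
    _ ≤ M + N := add_le_add (hM x h1 h2) (hN x h1 h2)
  smul_mem' := fun c f hf => by
    intro w
    obtain ⟨M, hM⟩ := hf w
    refine ⟨|c| * M, fun x h1 h2 => ?_⟩
    calc |(c • f) x| = |c| * |f x| := by simp [abs_mul]
    _ ≤ |c| * M := mul_le_mul_of_nonneg_left (hM x h1 h2) (abs_nonneg c)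

/-- The pointwise-on-positive-elements (pre)order on a space of functionals. -/
instance instSubPre (Y : Submodule ℝ (E →ₗ[ℝ] ℝ)) : Preorder Y where
  le f g := ∀ x : E, 0 ≤ x → (f : E →ₗ[ℝ] ℝ) x ≤ (g : E →ₗ[ℝ] ℝ) x
  le_refl f x _ := le_rfl
  le_trans f g h h1 h2 x hx := (h1 x hx).trans (h2 x hx)

variable {E}

theorem subPre_le_iff {Y : Submodule ℝ (E →ₗ[ℝ] ℝ)} {f g : Y} :
    f ≤ g ↔ ∀ x : E, 0 ≤ x → (f : E →ₗ[ℝ] ℝ) x ≤ (g : E →ₗ[ℝ] ℝ) x := Iff.rfl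

/-- Order convergence of a net to a limit (sandwich form: eventually
`l - d ≤ x_α ≤ l + d` for every `d` in a set directed downward to `0`). -/
def OConvTo {ι : Type*} [Preorder ι] (x : ι → E) (l : E) : Prop :=
  ∃ D : Set E, D.Nonempty ∧ DirectedOn (· ≥ ·) D ∧ IsGLB D 0 ∧
    ∀ d ∈ D, ∃ α₀ : ι, ∀ α, α₀ ≤ α → l - d ≤ x α ∧ x α ≤ l + d

/-- Order continuity of a linear functional: `f(x_α) → 0` whenever `x_α ↓ 0`. -/
def OrdContE (f : E →ₗ[ℝ] ℝ) : Prop :=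
  ∀ D : Set E, D.Nonempty → DirectedOn (· ≥ ·) D → IsGLB D 0 →
    ∀ ε : ℝ, 0 < ε → ∃ d ∈ D, ∀ e ∈ D, e ≤ d → |f e| < ε

end ODual

section VL

variable (X : Type*) [Lattice X] [AddCommGroup X]
  [CovariantClass X X (· + ·) (· ≤ ·)] [Module ℝ X] [PosSMulMono ℝ X]

variable {X} in
/-- Unbounded order convergence: `|x_α - l| ⊓ u →o 0` for every `u ≥ 0`. -/
def uoConvTo {ι : Type*} [Preorder ι] (x : ι → X) (l : X) : Prop :=
  ∀ u : X, 0 ≤ u → OConvTo (fun α => |x α - l| ⊓ u) (0 : X)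

/-- The canonical evaluation of `x ∈ X` on a space `Y` of functionals on `X`. -/
def hatFun (Y : Submodule ℝ (X →ₗ[ℝ] ℝ)) (x : X) : Y →ₗ[ℝ] ℝ where
  toFun f := (f : X →ₗ[ℝ] ℝ) x
  map_add' f g := by simp
  map_smul' c f := by simp

theorem hatFun_mem (Y : Submodule ℝ (X →ₗ[ℝ] ℝ)) (x : X) :
    hatFun X Y x ∈ obDual Y := by
  intro w
  refine ⟨(w : X →ₗ[ℝ] ℝ) (x⁺) + (w : X →ₗ[ℝ] ℝ) (x⁻), fun f h1 h2 => ?_⟩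
  have hp : (0 : X) ≤ x⁺ := posPart_nonneg x
  have hn : (0 : X) ≤ x⁻ := negPart_nonneg x
  have e1 := (subPre_le_iff.mp h1) _ hp
  have e2 := (subPre_le_iff.mp h2) _ hp
  have e3 := (subPre_le_iff.mp h1) _ hn
  have e4 := (subPre_le_iff.mp h2) _ hn
  have c1 : -((w : X →ₗ[ℝ] ℝ) (x⁺)) ≤ (f : X →ₗ[ℝ] ℝ) (x⁺) := by simpa using e1
  have c3 : -((w : X →ₗ[ℝ] ℝ) (x⁻)) ≤ (f : X →ₗ[ℝ] ℝ) (x⁻) := by simpa using e3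
  have key : (f : X →ₗ[ℝ] ℝ) x
      = (f : X →ₗ[ℝ] ℝ) (x⁺) - (f : X →ₗ[ℝ] ℝ) (x⁻) := by
    rw [← map_sub, posPart_sub_negPart]
  show |(f : X →ₗ[ℝ] ℝ) x| ≤ _
  rw [key]
  have a1 : |(f : X →ₗ[ℝ] ℝ) (x⁺)| ≤ (w : X →ₗ[ℝ] ℝ) (x⁺) := abs_le.mpr ⟨c1, e2⟩
  have a2 : |(f : X →ₗ[ℝ] ℝ) (x⁻)| ≤ (w : X →ₗ[ℝ] ℝ) (x⁻) := abs_le.mpr ⟨c3, e4⟩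
  have := abs_sub ((f : X →ₗ[ℝ] ℝ) (x⁺)) ((f : X →ₗ[ℝ] ℝ) (x⁻))
  linarith

/-- The canonical embedding of `X` into the order dual of `Y ⊆ X~`. -/
def hatEl (Y : Submodule ℝ (X →ₗ[ℝ] ℝ)) (x : X) : obDual Y :=
  ⟨hatFun X Y x, hatFun_mem X Y x⟩

noncomputable instance instSubPreBidual : Preorder (obDual ↥(obDual X)) :=
  instSubPre (↥(obDual X)) (obDual ↥(obDual X))

/-- `X~` separates the points of `X`. -/
def SepPoints : Prop := ∀ x : X, x ≠ 0 → ∃ f : obDual X, (f : X →ₗ[ℝ] ℝ) x ≠ 0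

/-- The canonical image of `X` in `X~~` is a regular sublattice:
`x_α ↓ 0` in `X` implies `x̂_α ↓ 0` in `X~~`. -/
def HatRegular : Prop :=
  ∀ D : Set X, D.Nonempty → DirectedOn (· ≥ ·) D → IsGLB D 0 →
    IsGLB (hatEl X (obDual X) '' D) (0 : obDual ↥(obDual X))

variable {X} in
/-- The net `x̂_α` is eventually order bounded in `X~~`. -/
def HatEvOB {ι : Type*} [Preorder ι] (x : ι → X) : Prop :=
  ∃ (b t : obDual ↥(obDual X)) (α₀ : ι), ∀ α, α₀ ≤ α →
    b ≤ hatEl X (obDual X) (x α) ∧ hatEl X (obDual X) (x α) ≤ t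

variable {X} in
/-- Bidual bounded uo-convergence. -/
def bbuoConvTo {ι : Type*} [Preorder ι] (x : ι → X) (l : X) : Prop :=
  uoConvTo x l ∧ HatEvOB x

/-- `X` has the `b`-property: every subset of `X` whose canonical image is
order bounded in `X~~` is order bounded in `X`. -/
def HasBProp : Prop :=
  ∀ A : Set X,
    (∃ b t : obDual ↥(obDual X), ∀ a ∈ A,
        b ≤ hatEl X (obDual X) a ∧ hatEl X (obDual X) a ≤ t) →
    ∃ b t : X, ∀ a ∈ A, b ≤ a ∧ a ≤ t

/-- The Archimedean property for a lattice-ordered group. -/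
def IsArch : Prop := ∀ x y : X, 0 ≤ x → (∀ n : ℕ, n • x ≤ y) → x = 0

end VL



section Aux
open Filter Set

variable {X : Type*} [Lattice X] [AddCommGroup X]
  [CovariantClass X X (· + ·) (· ≤ ·)] [Module ℝ X] [PosSMulMono ℝ X]

/-- Key lemma: an order continuous, order-bounded functional is uniformly small
on order intervals `[0, d]` for `d` far enough down a set `D ↓ 0`. -/
theorem aux_lemA (f : X →ₗ[ℝ] ℝ)
    (hb : ∀ w : X, ∃ M : ℝ, ∀ z : X, -w ≤ z → z ≤ w → |f z| ≤ M)
    (hoc : OrdContE f)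
    {D : Set X} (hne : D.Nonempty) (hdir : DirectedOn (· ≥ ·) D) (hglb : IsGLB D 0)
    {ε : ℝ} (hε : 0 < ε) :
    ∃ d ∈ D, ∀ z : X, 0 ≤ z → z ≤ d → f z < 2 * ε := by
  obtain ⟨x, hxD⟩ := hne
  have hx0 : (0:X) ≤ x := hglb.1 hxD
  set S : X → Set ℝ := fun a => f '' {z | 0 ≤ z ∧ z ≤ a} with hS
  have hSne : ∀ a : X, 0 ≤ a → (S a).Nonempty := fun a ha =>
    ⟨f 0, ⟨0, ⟨le_rfl, ha⟩, rfl⟩⟩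
  have hSbdd : ∀ a : X, 0 ≤ a → BddAbove (S a) := by
    intro a ha
    obtain ⟨M, hM⟩ := hb a
    refine ⟨M, ?_⟩
    rintro _ ⟨z, ⟨hz0, hza⟩, rfl⟩
    exact (abs_le.mp (hM z ((neg_nonpos.mpr ha).trans hz0) hza)).2
  set p : X → ℝ := fun a => sSup (S a) with hp
  have hple : ∀ a z : X, 0 ≤ a → 0 ≤ z → z ≤ a → f z ≤ p a := fun a z ha hz0 hza =>
    le_csSup (hSbdd a ha) ⟨z, ⟨hz0, hza⟩, rfl⟩
  have hsub : ∀ e : X, 0 ≤ e → e ≤ x → ∀ z : X, 0 ≤ z → z ≤ x - e →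
      f z ≤ p x - p e := by
    intro e he0 hex z hz0 hzx
    have h1 : ∀ v ∈ S e, v ≤ p x - f z := by
      rintro _ ⟨z₁, ⟨h10, h1e⟩, rfl⟩
      have hsum : f (z₁ + z) ≤ p x := by
        refine hple x _ hx0 (add_nonneg h10 hz0) ?_
        calc z₁ + z ≤ e + (x - e) := add_le_add h1e hzx
          _ = x := by abel
      rw [map_add] at hsum
      linarith
    have := csSup_le (hSne e he0) h1
    linarith
  obtain ⟨u, hu0, hux, hfu⟩ : ∃ u : X, 0 ≤ u ∧ u ≤ x ∧ p x - ε < f u := by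
    obtain ⟨v, hvS, hlt⟩ := exists_lt_of_lt_csSup (hSne x hx0)
      (by linarith : p x - ε < p x)
    obtain ⟨u, ⟨h1, h2⟩, rfl⟩ := hvS
    exact ⟨u, h1, h2, hlt⟩
  set T : Set X := {e | e ∈ D ∧ e ≤ x} with hT
  have hxT : x ∈ T := ⟨hxD, le_rfl⟩
  set D' : Set X := (fun e => u ⊓ e) '' T with hD'
  have hne' : D'.Nonempty := ⟨u ⊓ x, x, hxT, rfl⟩
  have hdir' : DirectedOn (· ≥ ·) D' := by
    rintro _ ⟨e₁, he₁, rfl⟩ _ ⟨e₂, he₂, rfl⟩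
    obtain ⟨e₃, he₃D, h31, h32⟩ := hdir e₁ he₁.1 e₂ he₂.1
    exact ⟨u ⊓ e₃, ⟨e₃, ⟨he₃D, h31.trans he₁.2⟩, rfl⟩,
      inf_le_inf_left u h31, inf_le_inf_left u h32⟩
  have hglb' : IsGLB D' 0 := by
    constructor
    · rintro _ ⟨e, he, rfl⟩
      exact le_inf hu0 (hglb.1 he.1)
    · intro c hc
      refine hglb.2 fun d hd => ?_
      obtain ⟨e, heD, he1, he2⟩ := hdir d hd x hxD
      exact (hc ⟨e, ⟨heD, he2⟩, rfl⟩).trans (inf_le_right.trans he1)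
  obtain ⟨d', hd'D', hkey⟩ := hoc D' hne' hdir' hglb' ε hε
  obtain ⟨e₀, he₀T, rfl⟩ := hd'D'
  have habs : |f (u ⊓ e₀)| < ε := hkey _ ⟨e₀, he₀T, rfl⟩ le_rfl
  have he₀0 : (0:X) ≤ e₀ := hglb.1 he₀T.1
  have hz' : f (u - u ⊓ e₀) ≤ p x - p e₀ := by
    refine hsub e₀ he₀0 he₀T.2 _ (by simpa using inf_le_left) ?_
    rw [sub_le_comm]
    refine le_inf (sub_le_self _ (sub_nonneg.mpr he₀T.2)) ?_
    rw [sub_le_iff_le_add]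
    calc u ≤ x := hux
      _ = e₀ + (x - e₀) := by abel
  rw [map_sub] at hz'
  refine ⟨e₀, he₀T.1, ?_⟩
  intro z hz0 hze
  have h4 := hple e₀ z he₀0 hz0 hze
  have h5 := (abs_lt.mp habs).2
  linarith

/-- Two-sided version: smallness on `[-d, d]`. -/
theorem aux_lemB (y : X →ₗ[ℝ] ℝ)
    (hb : ∀ w : X, ∃ M : ℝ, ∀ z : X, -w ≤ z → z ≤ w → |y z| ≤ M)
    (hoc : OrdContE y)
    {D : Set X} (hne : D.Nonempty) (hdir : DirectedOn (· ≥ ·) D) (hglb : IsGLB D 0)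
    {ε : ℝ} (hε : 0 < ε) :
    ∃ d ∈ D, ∀ z : X, |z| ≤ d → |y z| < ε := by
  have hε5 : (0:ℝ) < ε/5 := by linarith
  have hb' : ∀ w : X, ∃ M : ℝ, ∀ z : X, -w ≤ z → z ≤ w → |(-y) z| ≤ M := by
    intro w
    obtain ⟨M, hM⟩ := hb w
    exact ⟨M, fun z h1 h2 => by simpa [abs_neg] using hM z h1 h2⟩
  have hoc' : OrdContE (-y) := by
    intro D h1 h2 h3 δ hδ
    obtain ⟨d, hd, hk⟩ := hoc D h1 h2 h3 δ hδ
    exact ⟨d, hd, fun e he hed => by simpa [abs_neg] using hk e he hed⟩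
  obtain ⟨d₁, hd₁, h1⟩ := aux_lemA y hb hoc hne hdir hglb hε5
  obtain ⟨d₂, hd₂, h2⟩ := aux_lemA (-y) hb' hoc' hne hdir hglb hε5
  obtain ⟨d, hdD, hdd₁, hdd₂⟩ := hdir d₁ hd₁ d₂ hd₂
  refine ⟨d, hdD, ?_⟩
  intro z hz
  have hzp : z⁺ ≤ |z| := by
    rw [posPart_def]
    exact sup_le (le_abs_self z) (abs_nonneg z)
  have hzn : z⁻ ≤ |z| := by
    rw [negPart_def]
    exact sup_le (neg_le_abs z) (abs_nonneg z)
  have e1 : y z⁺ < 2*(ε/5) := h1 z⁺ (posPart_nonneg z) ((hzp.trans hz).trans hdd₁)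
  have e2 : y z⁻ < 2*(ε/5) := h1 z⁻ (negPart_nonneg z) ((hzn.trans hz).trans hdd₁)
  have e3 : -(y z⁺) < 2*(ε/5) := by
    simpa using h2 z⁺ (posPart_nonneg z) ((hzp.trans hz).trans hdd₂)
  have e4 : -(y z⁻) < 2*(ε/5) := by
    simpa using h2 z⁻ (negPart_nonneg z) ((hzn.trans hz).trans hdd₂)
  have hyz : y z = y z⁺ - y z⁻ := by rw [← map_sub, posPart_sub_negPart]
  rw [hyz, abs_sub_lt_iff]
  constructor <;> linarith

end Aux

/-- `y ∈ X~` is order continuous iff `y(x_α) → 0` for every eventually order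
bounded uo-null net `x_α`. -/
theorem statement5 {X : Type u} [Lattice X] [AddCommGroup X]
    [CovariantClass X X (· + ·) (· ≤ ·)] [Module ℝ X] [PosSMulMono ℝ X]
    (harch : IsArch X)
    (y : obDual X) :
    OrdContE (y : X →ₗ[ℝ] ℝ) ↔
      ∀ (ι : Type u) [Preorder ι] [Nonempty ι] [IsDirected ι (· ≤ ·)] (x : ι → X),
        uoConvTo x 0 → (∃ (w : X) (α₀ : ι), ∀ α, α₀ ≤ α → |x α| ≤ w) →
        Filter.Tendsto (fun α => (y : X →ₗ[ℝ] ℝ) (x α)) Filter.atTop (nhds 0) := by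
  constructor
  · intro hoc ι _ _ _ x hx hbd
    rw [NormedAddCommGroup.tendsto_nhds_zero]
    intro ε hε
    obtain ⟨w, α₀, hw⟩ := hbd
    have hw0 : (0:X) ≤ w := (abs_nonneg (x α₀)).trans (hw α₀ le_rfl)
    obtain ⟨D, hne, hdir, hglb, hconv⟩ := hx w hw0
    set D' : Set X := (fun d => d ⊓ w) '' D with hD'
    have hne' : D'.Nonempty := hne.image _
    have hdir' : DirectedOn (· ≥ ·) D' := by
      rintro _ ⟨d₁, h1, rfl⟩ _ ⟨d₂, h2, rfl⟩
      obtain ⟨d₃, h3, h31, h32⟩ := hdir d₁ h1 d₂ h2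
      exact ⟨d₃ ⊓ w, ⟨d₃, h3, rfl⟩, inf_le_inf_right w h31, inf_le_inf_right w h32⟩
    have hglb' : IsGLB D' 0 := by
      constructor
      · rintro _ ⟨d, hd, rfl⟩
        exact le_inf (hglb.1 hd) hw0
      · intro c hc
        exact hglb.2 fun d hd => (hc ⟨d, hd, rfl⟩).trans inf_le_left
    obtain ⟨d', hd'D', hkey⟩ := aux_lemB (y : X →ₗ[ℝ] ℝ) y.2 hoc hne' hdir' hglb' hε
    obtain ⟨d, hdD, rfl⟩ := hd'D'
    obtain ⟨α₁, hα₁⟩ := hconv d hdD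
    obtain ⟨α₂, h2a, h2b⟩ := directed_of (· ≤ ·) α₀ α₁
    filter_upwards [Filter.mem_atTop α₂] with α hα
    have h1 : |x α| ≤ w := hw α (h2a.trans hα)
    have h2 := (hα₁ α (h2b.trans hα)).2
    simp only [sub_zero, zero_add] at h2
    have h1' : |x α| ⊓ w = |x α| := inf_eq_left.mpr h1
    have h3 : |x α| ≤ d ⊓ w := le_inf (by rw [← h1']; exact h2) h1
    simpa [Real.norm_eq_abs] using hkey (x α) h3
  · intro H D hne hdir hglb ε hε
    haveI hds : Nonempty (↥D) := hne.to_subtype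
    haveI : Nonempty ((↥D)ᵒᵈ) := hds
    haveI : IsDirected ((↥D)ᵒᵈ) (· ≤ ·) := by
      constructor
      intro a b
      obtain ⟨c, hcD, hc1, hc2⟩ :=
        hdir _ (OrderDual.ofDual a).2 _ (OrderDual.ofDual b).2
      exact ⟨OrderDual.toDual ⟨c, hcD⟩, hc1, hc2⟩
    set x : (↥D)ᵒᵈ → X := fun d => ((OrderDual.ofDual d : ↥D) : X) with hxdef
    have hmemx : ∀ α : (↥D)ᵒᵈ, x α ∈ D := fun α => (OrderDual.ofDual α).2
    have hx0 : ∀ α : (↥D)ᵒᵈ, (0:X) ≤ x α := fun α => hglb.1 (hmemx α)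
    have huo : uoConvTo x 0 := by
      intro u hu
      refine ⟨D, hne, hdir, hglb, ?_⟩
      intro e heD
      refine ⟨OrderDual.toDual ⟨e, heD⟩, ?_⟩
      intro α hα
      have hα' : x α ≤ e := hα
      constructor
      · calc (0:X) - e = -e := by abel
          _ ≤ 0 := neg_nonpos.mpr (hglb.1 heD)
          _ ≤ |x α - 0| ⊓ u := le_inf (by rw [sub_zero]; exact abs_nonneg _) hu
      · calc |x α - 0| ⊓ u ≤ |x α - 0| := inf_le_left
          _ = x α := by rw [sub_zero, abs_of_nonneg (hx0 α)]
          _ ≤ e := hα'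
          _ = 0 + e := (zero_add e).symm
    have hob : ∃ (w : X) (α₀ : (↥D)ᵒᵈ), ∀ α, α₀ ≤ α → |x α| ≤ w := by
      obtain ⟨d₀, hd₀⟩ := hne
      refine ⟨d₀, OrderDual.toDual ⟨d₀, hd₀⟩, fun α hα => ?_⟩
      rw [abs_of_nonneg (hx0 α)]
      exact hα
    have htd := H ((↥D)ᵒᵈ) x huo hob
    rw [NormedAddCommGroup.tendsto_nhds_zero] at htd
    obtain ⟨a, ha⟩ := Filter.eventually_atTop.mp (htd ε hε)
    refine ⟨x a, hmemx a, ?_⟩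
    intro e heD hed
    have := ha (OrderDual.toDual ⟨e, heD⟩) hed
    have h2 : x (OrderDual.toDual ⟨e, heD⟩) = e := rfl
    simpa [Real.norm_eq_abs, h2] using this
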